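/- arXiv:0911.1810 — 5 statements merged into one kernel-verified Lean document; each statement's English description precedes it below -/
import Mathlib

section
/- Let A be an n×n complex matrix with rank(A) ≥ n-1 (n ≥ 2) such that det(A) is not equal to i·r for any real r < 0 (i.e., det A is not a negative imaginary number). Then the matrix ψ(A) = A + i·conj(adj(A))^T is invertible, where conj denotes entrywise complex conjugation. -/
open Matrix

private lemma star_dot_self {n : ℕ} (v : Fin n → ℂ) :
    star v ⬝ᵥ v = ((∑ i, Complex.normSq (v i) : ℝ) : ℂ) := by
  push_cast
  simp only [dotProduct, Pi.star_apply, RCLike.star_def]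
  refine Finset.sum_congr rfl fun i _ => ?_
  rw [mul_comm, Complex.mul_conj]

private lemma adj_ne_zero {n : ℕ} (hn : 2 ≤ n) (A : Matrix (Fin n) (Fin n) ℂ)
    (hr : A.rank = n - 1) (hd : A.det = 0) : A.adjugate ≠ 0 := by
  intro hadj
  have hpin : Module.finrank ℂ (Fin n → ℂ) = n := by simp
  have hnotli : ¬ LinearIndependent ℂ (fun j => Aᵀ j) := by
    intro h
    have h2 := (Matrix.isUnit_iff_isUnit_det A).mp (linearIndependent_cols_iff_isUnit.mp h)
    rw [hd] at h2
    exact h2.ne_zero rfl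
  obtain ⟨g, hg, j, hgj⟩ := Fintype.not_linearIndependent_iff.mp hnotli
  set W := Submodule.span ℂ (Set.range Aᵀ) with hWdef
  have hW : Module.finrank ℂ W = n - 1 := by
    rw [hWdef, show Set.range Aᵀ = Set.range A.col from rfl, ← Matrix.rank_eq_finrank_span_cols, hr]
  obtain ⟨b, hb⟩ : ∃ b, b ∉ W := by
    by_contra h
    push_neg at h
    have : W = ⊤ := Submodule.eq_top_iff'.mpr h
    rw [this, finrank_top, hpin] at hW
    omega
  set S := Submodule.span ℂ (Set.range (A.updateCol j b)ᵀ) with hSdef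
  have hcolmem : ∀ k, (A.updateCol j b)ᵀ k ∈ S := fun k =>
    Submodule.subset_span ⟨k, rfl⟩
  have htr : (A.updateCol j b)ᵀ = Aᵀ.updateRow j b := (updateRow_transpose).symm
  have hbS : b ∈ S := by
    have := hcolmem j
    rwa [htr, updateRow_self] at this
  have hAkS : ∀ k, k ≠ j → Aᵀ k ∈ S := by
    intro k hk
    have := hcolmem k
    rwa [htr, updateRow_ne hk] at this
  have hAjS : Aᵀ j ∈ S := by
    have hsum : g j • Aᵀ j + ∑ k ∈ Finset.univ.erase j, g k • Aᵀ k = 0 := by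
      rw [Finset.add_sum_erase Finset.univ (fun k => g k • Aᵀ k) (Finset.mem_univ j)]
      exact hg
    have hj : Aᵀ j = (g j)⁻¹ • (-(∑ k ∈ Finset.univ.erase j, g k • Aᵀ k)) := by
      rw [eq_inv_smul_iff₀ hgj]
      exact eq_neg_of_add_eq_zero_left hsum
    rw [hj]
    refine Submodule.smul_mem _ _ (Submodule.neg_mem _ (Submodule.sum_mem _ fun k hk => ?_))
    exact Submodule.smul_mem _ _ (hAkS k (Finset.ne_of_mem_erase hk))
  have hWS : W < S := by
    refine lt_of_le_of_ne (Submodule.span_le.mpr ?_) (fun h => hb (h ▸ hbS))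
    rintro _ ⟨k, rfl⟩
    by_cases hk : k = j
    · subst hk; exact hAjS
    · exact hAkS k hk
  have hfr : Module.finrank ℂ S = n := by
    have h1 := Submodule.finrank_lt_finrank_of_lt hWS
    have h2 : Module.finrank ℂ S ≤ n := le_trans (Submodule.finrank_le S) (le_of_eq hpin)
    omega
  have hStop : S = ⊤ := Submodule.eq_top_of_finrank_eq (by rw [hfr, hpin])
  have hsurj : Function.Surjective (A.updateCol j b).mulVec := by
    have : LinearMap.range (A.updateCol j b).mulVecLin = ⊤ := by
      rw [Matrix.range_mulVecLin, show Set.range (A.updateCol j b).col = Set.range (A.updateCol j b)ᵀ from rfl, ← hSdef, hStop]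
    exact LinearMap.range_eq_top.mp this
  have hunit := Matrix.mulVec_surjective_iff_isUnit.mp hsurj
  have hdet := ((Matrix.isUnit_iff_isUnit_det _).mp hunit).ne_zero
  apply hdet
  have : (A.updateCol j b).det = Matrix.cramer A b j := (Matrix.cramer_apply A b j).symm
  rw [this, Matrix.cramer_eq_adjugate_mulVec, hadj, Matrix.zero_mulVec]
  rfl

theorem psi_isUnit {n : ℕ} (hn : 2 ≤ n) (A : Matrix (Fin n) (Fin n) ℂ)
    (hrank : n - 1 ≤ A.rank)
    (hdet : ¬ ∃ r : ℝ, r < 0 ∧ A.det = Complex.I * r) :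
    IsUnit (A + Complex.I • (A.adjugate)ᴴ) := by
  have key : ∀ z : Fin n → ℂ, (A + Complex.I • (A.adjugate)ᴴ) *ᵥ z = 0 → z = 0 := by
    intro z hz
    by_contra hz0
    -- positivity of star z ⬝ᵥ z
    obtain ⟨i0, hi0⟩ : ∃ i, z i ≠ 0 := by
      by_contra h; push_neg at h; exact hz0 (funext h)
    set bR : ℝ := ∑ i, Complex.normSq (z i) with hbdef
    have hbpos : 0 < bR := by
      refine Finset.sum_pos' (fun i _ => Complex.normSq_nonneg _) ⟨i0, Finset.mem_univ _, ?_⟩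
      exact Complex.normSq_pos.mpr hi0
    -- main matrix identity
    have hmul : Aᴴ * (A + Complex.I • (A.adjugate)ᴴ)
        = Aᴴ * A + (Complex.I * star A.det) • 1 := by
      rw [Matrix.mul_add, mul_smul_comm, ← Matrix.conjTranspose_mul,
        Matrix.adjugate_mul, Matrix.conjTranspose_smul, Matrix.conjTranspose_one, smul_smul]
    have h2 : (Aᴴ * A) *ᵥ z + (Complex.I * star A.det) • z = 0 := by
      have := congrArg (fun w => Aᴴ *ᵥ w) hz
      simp only [Matrix.mulVec_mulVec, Matrix.mulVec_zero] at this
      rw [hmul, Matrix.add_mulVec, Matrix.smul_mulVec, Matrix.one_mulVec] at this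
      exact this
    -- dot with star z
    set aR : ℝ := ∑ i, Complex.normSq ((A *ᵥ z) i) with hadef
    have hS1 : star z ⬝ᵥ ((Aᴴ * A) *ᵥ z) = (aR : ℂ) := by
      rw [← Matrix.mulVec_mulVec, Matrix.dotProduct_mulVec, ← Matrix.star_mulVec]
      exact star_dot_self _
    have heq : (aR : ℂ) + (Complex.I * star A.det) * (bR : ℂ) = 0 := by
      have := congrArg (fun w => star z ⬝ᵥ w) h2
      simp only [dotProduct_add, dotProduct_zero, dotProduct_smul,
        smul_eq_mul] at this
      rwa [hS1, star_dot_self] at this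
    set c : ℂ := Complex.I * star A.det with hcdef
    have hbne : (bR : ℂ) ≠ 0 := by
      exact_mod_cast ne_of_gt hbpos
    have hc : c = ((-(aR / bR) : ℝ) : ℂ) := by
      push_cast
      field_simp at heq ⊢
      linear_combination heq
    have hdetA : A.det = Complex.I * ((-(aR / bR) : ℝ) : ℂ) := by
      have hsd : star A.det = -(Complex.I) * c := by
        rw [hcdef]; ring_nf; rw [Complex.I_sq]; ring
      have : A.det = star (-(Complex.I) * c) := by
        rw [← hsd, star_star]
      rw [this, hc]
      simp [Complex.star_def, Complex.conj_ofReal]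
    have hμ : 0 ≤ aR / bR := div_nonneg (Finset.sum_nonneg fun i _ => Complex.normSq_nonneg _) hbpos.le
    have ha0 : aR = 0 := by
      rcases eq_or_lt_of_le hμ with h | h
      · have h' := h.symm
        rw [div_eq_zero_iff] at h'
        rcases h' with h' | h'
        · exact h'
        · exact absurd h' (ne_of_gt hbpos)
      · exact absurd ⟨-(aR / bR), ⟨by linarith, hdetA⟩⟩ hdet
    have hdet0 : A.det = 0 := by
      rw [hdetA, ha0]
      simp
    have hAz : A *ᵥ z = 0 := by
      have : ∀ i, Complex.normSq ((A *ᵥ z) i) = 0 := by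
        intro i
        have hnn : ∀ i ∈ Finset.univ, 0 ≤ Complex.normSq ((A *ᵥ z) i) :=
          fun i _ => Complex.normSq_nonneg _
        exact (Finset.sum_eq_zero_iff_of_nonneg hnn).mp ha0 i (Finset.mem_univ i)
      funext i
      exact Complex.normSq_eq_zero.mp (this i)
    have hadjz : (A.adjugate)ᴴ *ᵥ z = 0 := by
      rw [Matrix.add_mulVec, hAz, zero_add, Matrix.smul_mulVec] at hz
      rcases smul_eq_zero.mp hz with h | h
      · exact absurd h Complex.I_ne_zero
      · exact h
    -- rank A = n - 1
    have hpin : Module.finrank ℂ (Fin n → ℂ) = n := by simp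
    have hrle : A.rank ≤ n := le_trans A.rank_le_card_width (by simp)
    have hrne : A.rank ≠ n := by
      intro h
      have htop : LinearMap.range A.mulVecLin = ⊤ := by
        apply Submodule.eq_top_of_finrank_eq
        rw [hpin]
        exact h
      have hsurj : Function.Surjective A.mulVec := LinearMap.range_eq_top.mp htop
      have := ((Matrix.isUnit_iff_isUnit_det _).mp
        (Matrix.mulVec_surjective_iff_isUnit.mp hsurj)).ne_zero
      exact this hdet0
    have hrk : A.rank = n - 1 := by omega
    -- kernel is 1-dimensional, spanned by z
    have hker1 : Module.finrank ℂ (LinearMap.ker A.mulVecLin) = 1 := by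
      have := LinearMap.finrank_range_add_finrank_ker A.mulVecLin
      rw [hpin] at this
      have hrr : Module.finrank ℂ (LinearMap.range A.mulVecLin) = n - 1 := hrk
      omega
    have hzker : z ∈ LinearMap.ker A.mulVecLin := by
      rw [LinearMap.mem_ker, Matrix.mulVecLin_apply]
      exact hAz
    have hspan : Submodule.span ℂ {z} = LinearMap.ker A.mulVecLin := by
      apply Submodule.eq_of_le_of_finrank_le
      · rw [Submodule.span_le, Set.singleton_subset_iff]; exact hzker
      · rw [hker1, finrank_span_singleton hz0]
    -- nonzero column of adjugate
    have hadj := adj_ne_zero hn A hrk hdet0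
    obtain ⟨i1, j1, hij⟩ : ∃ i j, A.adjugate i j ≠ 0 := by
      by_contra h
      push_neg at h
      exact hadj (by ext i j; exact h i j)
    set u : Fin n → ℂ := fun i => A.adjugate i j1 with hudef
    have hu0 : u ≠ 0 := fun h => hij (congrFun h i1)
    have hAu : A *ᵥ u = 0 := by
      funext i
      have : (A *ᵥ u) i = (A * A.adjugate) i j1 := by
        simp [hudef, Matrix.mulVec, Matrix.mul_apply, dotProduct]
      rw [this, Matrix.mul_adjugate, hdet0, zero_smul]
      rfl
    have huker : u ∈ LinearMap.ker A.mulVecLin := by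
      rw [LinearMap.mem_ker, Matrix.mulVecLin_apply]; exact hAu
    rw [← hspan] at huker
    obtain ⟨t, ht⟩ := Submodule.mem_span_singleton.mp huker
    -- star u ⬝ᵥ z = 0 from hadjz at j1
    have hdot : star u ⬝ᵥ z = 0 := by
      have := congrFun hadjz j1
      simpa [Matrix.mulVec, dotProduct, Matrix.conjTranspose_apply, hudef] using this
    rw [← ht] at hdot
    have : star t * (star z ⬝ᵥ z) = 0 := by
      rw [← hdot, star_smul, smul_dotProduct]
      rfl
    rw [star_dot_self] at this
    have hbne : ((∑ i, Complex.normSq (z i) : ℝ) : ℂ) ≠ 0 := by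
      exact_mod_cast ne_of_gt hbpos
    have ht0 : t = 0 := by
      rcases mul_eq_zero.mp this with h | h
      · simpa using congrArg star h
      · exact absurd h hbne
    rw [ht0, zero_smul] at ht
    exact hu0 ht.symm
  rw [← Matrix.mulVec_injective_iff_isUnit]
  intro x y hxy
  have h0 : (A + Complex.I • (A.adjugate)ᴴ) *ᵥ (x - y) = 0 := by
    rw [Matrix.mulVec_sub, hxy, sub_self]
  exact sub_eq_zero.mp (key _ h0)
end

section
/- Let A be an n×n Hermitian complex matrix with rank(A) ≥ n-1 (n ≥ 2). Then A + i·conj(adj(A))^T is invertible. -/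
open Matrix

theorem psi_isUnit_of_hermitian {n : ℕ} (hn : 2 ≤ n) (A : Matrix (Fin n) (Fin n) ℂ)
    (hA : A.IsHermitian) (hrank : n - 1 ≤ A.rank) :
    IsUnit (A + Complex.I • (A.adjugate)ᴴ) := by
  classical
  have hadjH : (A.adjugate)ᴴ = A.adjugate := by
    rw [Matrix.adjugate_conjTranspose, hA.eq]
  rw [hadjH]
  set U : Matrix (Fin n) (Fin n) ℂ := (hA.eigenvectorUnitary : Matrix (Fin n) (Fin n) ℂ)
  have hU1 : star U * U = 1 := (Matrix.mem_unitaryGroup_iff').mp hA.eigenvectorUnitary.2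
  have hU2 : U * star U = 1 := (Matrix.mem_unitaryGroup_iff).mp hA.eigenvectorUnitary.2
  set d : Fin n → ℝ := hA.eigenvalues
  set D : Matrix (Fin n) (Fin n) ℂ := diagonal (fun i => (d i : ℂ))
  have hspec : A = U * D * star U := by
    have := hA.spectral_theorem
    convert this using 2
    rfl
  -- adjugate of U and star U
  have hdetU : U.det * (star U).det = 1 := by
    rw [← Matrix.det_mul, hU2, Matrix.det_one]
  have hadjU : U.adjugate = U.det • star U := by
    have h := Matrix.mul_adjugate U
    calc U.adjugate = (star U * U) * U.adjugate := by rw [hU1, one_mul]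
      _ = star U * (U * U.adjugate) := by rw [mul_assoc]
      _ = star U * (U.det • (1 : Matrix (Fin n) (Fin n) ℂ)) := by rw [h]
      _ = U.det • star U := by rw [Matrix.mul_smul, mul_one]
  have hadjUs : (star U).adjugate = (star U).det • U := by
    have h := Matrix.mul_adjugate (star U)
    calc (star U).adjugate = (U * star U) * (star U).adjugate := by rw [hU2, one_mul]
      _ = U * (star U * (star U).adjugate) := by rw [mul_assoc]
      _ = U * ((star U).det • (1 : Matrix (Fin n) (Fin n) ℂ)) := by rw [h]
      _ = (star U).det • U := by rw [Matrix.mul_smul, mul_one]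
  have hadjA : A.adjugate = U * D.adjugate * star U := by
    rw [hspec, Matrix.adjugate_mul_distrib, Matrix.adjugate_mul_distrib, hadjU, hadjUs]
    simp only [Matrix.smul_mul, Matrix.mul_smul, smul_smul, mul_assoc]
    rw [hdetU, one_smul]
  have key : A + Complex.I • A.adjugate = U * (D + Complex.I • D.adjugate) * star U := by
    rw [Matrix.mul_add, Matrix.add_mul, ← hspec, Matrix.mul_smul, Matrix.smul_mul, ← hadjA]
  rw [key]
  -- at most one eigenvalue is zero
  have hcard : Fintype.card {i // d i ≠ 0} = A.rank := (hA.rank_eq_card_non_zero_eigs).symm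
  have hone : ∀ i j : Fin n, d i = 0 → d j = 0 → i = j := by
    intro i j hi hj
    by_contra hij
    have hsub : Fintype.card {k // d k ≠ 0} ≤ n - 2 := by
      have : ({i, j}ᶜ : Finset (Fin n)).card = n - 2 := by
        rw [Finset.card_compl, Finset.card_insert_of_notMem (by simpa using hij),
          Finset.card_singleton, Fintype.card_fin]
      rw [← this]
      rw [Fintype.card_subtype]
      apply Finset.card_le_card
      intro k hk
      simp only [Finset.mem_filter, Finset.mem_univ, true_and] at hk
      simp only [Finset.mem_compl, Finset.mem_insert, Finset.mem_singleton]
      rintro (rfl | rfl) <;> exact hk (by assumption)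
    have h2 : n - 1 ≤ n - 2 := le_trans (hrank.trans_eq hcard.symm) hsub
    omega
  -- middle diagonal matrix is a unit
  have hmid : IsUnit (D + Complex.I • D.adjugate) := by
    have hD : D + Complex.I • D.adjugate =
        diagonal (fun i => (d i : ℂ) + Complex.I * ∏ j ∈ Finset.univ.erase i, (d j : ℂ)) := by
      rw [Matrix.adjugate_diagonal]
      ext i j
      by_cases h : i = j
      · subst h; simp [D, Matrix.add_apply, Matrix.smul_apply, Matrix.diagonal_apply_eq]
      · simp [D, Matrix.add_apply, Matrix.smul_apply, Matrix.diagonal_apply_ne _ h]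
    rw [hD, Matrix.isUnit_diagonal]
    have hv : ∀ i, ((d i : ℂ) + Complex.I * ∏ j ∈ Finset.univ.erase i, (d j : ℂ)) ≠ 0 := by
      intro i hz
      simp only [← Complex.ofReal_prod, Complex.ext_iff, Complex.add_re, Complex.mul_re,
        Complex.I_re, Complex.I_im, Complex.ofReal_re, Complex.ofReal_im, Complex.add_im,
        Complex.mul_im, Complex.zero_re, Complex.zero_im, zero_mul, mul_zero, one_mul,
        mul_one, sub_zero, add_zero, zero_add, zero_sub] at hz
      obtain ⟨h1, h2⟩ := hz
      obtain ⟨j, hj, hdj⟩ := Finset.prod_eq_zero_iff.mp h2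
      exact (Finset.ne_of_mem_erase hj) (hone j i hdj h1)
    exact IsUnit.of_mul_eq_one
      (fun i => ((d i : ℂ) + Complex.I * ∏ j ∈ Finset.univ.erase i, (d j : ℂ))⁻¹)
      (funext fun i => mul_inv_cancel₀ (hv i))
  rw [Matrix.isUnit_iff_isUnit_det] at hmid ⊢
  rw [Matrix.det_mul, Matrix.det_mul]
  have : IsUnit U.det := IsUnit.of_mul_eq_one _ hdetU
  exact (this.mul hmid).mul (IsUnit.of_mul_eq_one _ (by rwa [mul_comm] at hdetU))
end

section
/- Let A be an n×n real matrix with rank(A) ≥ n-1 (n ≥ 2), viewed as a complex matrix. Then A + i·adj(A)^T is invertible (over ℂ). -/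
open Matrix Module Set

private lemma aux_adjugate_ne_zero {n : ℕ} {K : Type*} [Field K] (hn : 2 ≤ n)
    (A : Matrix (Fin n) (Fin n) K) (hrank : n - 1 ≤ A.rank) : adjugate A ≠ 0 := by
  intro hadj
  -- det = 0
  have hd : A.det = 0 := by
    have h2 := adjugate_mul A
    rw [hadj, zero_mul] at h2
    by_contra hdne
    have h1 : (1 : Matrix (Fin n) (Fin n) K) = 0 := by
      have h3 := h2.symm
      rwa [smul_eq_zero, or_iff_right hdne] at h3
    haveI : Nonempty (Fin n) := ⟨⟨0, by omega⟩⟩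
    exact one_ne_zero h1
  -- all updateRow dets vanish
  have hup : ∀ (j : Fin n) (b : Fin n → K), (A.updateRow j b).det = 0 := by
    intro j b
    rw [← cramer_transpose_apply, cramer_eq_adjugate_mulVec, ← adjugate_transpose, hadj]
    simp
  -- rank = n - 1 exactly: rank ≤ n - 1 since det = 0
  have hle : A.rank ≤ n - 1 := by
    obtain ⟨v, hv, hAv⟩ := (Matrix.exists_mulVec_eq_zero_iff).mpr hd
    have hrn : A.rank + finrank K (LinearMap.ker A.mulVecLin) = n := by
      have := LinearMap.finrank_range_add_finrank_ker A.mulVecLin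
      simpa [Matrix.rank, Module.finrank_pi] using this
    have hker : finrank K (LinearMap.ker A.mulVecLin) ≠ 0 := by
      intro h0
      rw [Submodule.finrank_eq_zero] at h0
      have hm : v ∈ LinearMap.ker A.mulVecLin := by simpa [LinearMap.mem_ker] using hAv
      rw [h0] at hm
      exact hv (by simpa using hm)
    omega
  have hr : A.rank = n - 1 := le_antisymm hle hrank
  -- span of rows has finrank n-1
  have hrowspan : finrank K (Submodule.span K (Set.range A)) = n - 1 := by
    exact (Matrix.rank_eq_finrank_span_row A).symm.trans hr
  -- extract independent subset t of rows
  obtain ⟨t, hts, htspan, htli⟩ := exists_linearIndependent K (Set.range (A : Fin n → Fin n → K))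
  have htfin : t.Finite := htli.setFinite
  haveI := htfin.fintype
  have htcard : t.toFinset.card = n - 1 := by
    have := finrank_span_set_eq_card htli
    rw [htspan, hrowspan] at this
    omega
  haveI := htfin.fintype
  have htcard : Fintype.card t = n - 1 := by
    have h1 := finrank_span_set_eq_card htli
    rw [htspan, hrowspan] at h1
    rw [← Set.toFinset_card, ← h1]
  choose g hg using fun v : t => hts v.2
  have hginj : Function.Injective g := by
    intro v1 v2 h
    apply Subtype.ext
    rw [← hg v1, ← hg v2, h]
  -- there is an index j not hit by g
  obtain ⟨j, hj⟩ : ∃ j, ∀ v, g v ≠ j := by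
    by_contra hc
    push_neg at hc
    have hsurj : Function.Surjective g := by
      intro j
      obtain ⟨v, hv⟩ := hc j
      exact ⟨v, hv⟩
    have := Fintype.card_of_bijective ⟨hginj, hsurj⟩
    rw [htcard, Fintype.card_fin] at this
    omega
  -- every i ≠ j is hit by g
  have hhit : ∀ i, i ≠ j → ∃ v : t, g v = i := by
    have hsub : Finset.univ.image g ⊆ Finset.univ.erase j := by
      intro i hi
      simp only [Finset.mem_image] at hi
      obtain ⟨v, -, hv⟩ := hi
      exact Finset.mem_erase.mpr ⟨hv ▸ hj v, Finset.mem_univ _⟩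
    have hcards : (Finset.univ.erase j).card ≤ (Finset.univ.image g).card := by
      rw [Finset.card_image_of_injective _ hginj, Finset.card_erase_of_mem (Finset.mem_univ _)]
      simp [htcard, Fintype.card_fin]
    have heq := Finset.eq_of_subset_of_card_le hsub hcards
    intro i hi
    have : i ∈ Finset.univ.image g := by
      rw [heq]
      exact Finset.mem_erase.mpr ⟨hi, Finset.mem_univ _⟩
    simpa using this
  -- w outside the row span
  have hne_top : Submodule.span K (Set.range A) ≠ ⊤ := by
    intro htop
    rw [htop, finrank_top, Module.finrank_pi] at hrowspan
    simp at hrowspan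
    omega
  obtain ⟨w, -, hw⟩ : ∃ w, w ∈ (⊤ : Submodule K (Fin n → K)) ∧ w ∉ Submodule.span K (Set.range A) :=
    SetLike.exists_of_lt (lt_top_iff_ne_top.mpr hne_top)
  have hw' : w ∉ Submodule.span K t := by rwa [htspan]
  set M := A.updateRow j w with hM
  -- rows of M are linearly independent
  have hins : LinearIndependent K (Subtype.val : ↥(insert w t) → (Fin n → K)) :=
    LinearIndepOn.id_insert htli hw'
  have hMmem : ∀ i, M i ∈ insert w t := by
    intro i
    by_cases hij : i = j
    · subst hij; simp [hM]
    · obtain ⟨v, hv⟩ := hhit i hij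
      rw [hM]
      refine Set.mem_insert_iff.mpr (Or.inr ?_)
      rw [Matrix.updateRow_ne hij, ← hv, hg v]
      exact v.2
  have hMinj : Function.Injective (fun i => (⟨M i, hMmem i⟩ : ↥(insert w t))) := by
    intro i1 i2 h
    have h' : M i1 = M i2 := congrArg Subtype.val h
    by_cases h1 : i1 = j <;> by_cases h2 : i2 = j
    · rw [h1, h2]
    · exfalso
      apply hw'
      have : M i1 = w := by rw [h1, hM]; simp
      obtain ⟨v, hv⟩ := hhit i2 h2
      have h2' : M i2 = (v : Fin n → K) := by rw [hM, Matrix.updateRow_ne h2, ← hg v, hv]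
      rw [this, h2'] at h'  -- w = v
      rw [h']
      exact Submodule.subset_span v.2
    · exfalso
      apply hw'
      have : M i2 = w := by rw [h2, hM]; simp
      obtain ⟨v, hv⟩ := hhit i1 h1
      have h1' : M i1 = (v : Fin n → K) := by rw [hM, Matrix.updateRow_ne h1, ← hg v, hv]
      rw [this, h1'] at h'
      rw [← h']
      exact Submodule.subset_span v.2
    · obtain ⟨v1, hv1⟩ := hhit i1 h1
      obtain ⟨v2, hv2⟩ := hhit i2 h2
      have e1 : M i1 = (v1 : Fin n → K) := by rw [hM, Matrix.updateRow_ne h1, ← hg v1, hv1]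
      have e2 : M i2 = (v2 : Fin n → K) := by rw [hM, Matrix.updateRow_ne h2, ← hg v2, hv2]
      have : v1 = v2 := Subtype.ext (by rw [← e1, ← e2, h'])
      rw [← hv1, ← hv2, this]
  have hMli : LinearIndependent K (fun i => M i) := by
    have := hins.comp _ hMinj
    exact this
  have hMunit : IsUnit M := Matrix.linearIndependent_rows_iff_isUnit.mp hMli
  have hMdet : M.det ≠ 0 := by
    intro h0
    have := hMunit
    rw [Matrix.isUnit_iff_isUnit_det, h0] at this
    exact not_isUnit_zero this
  exact hMdet (hup j w)

private lemma aux_key {n : ℕ} (hn : 2 ≤ n) (A : Matrix (Fin n) (Fin n) ℝ) (hrank : n - 1 ≤ A.rank)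
    (hadj : adjugate A ≠ 0)
    (x : Fin n → ℝ) (hx : x ≠ 0) (hAx : A *ᵥ x = 0) (hax : (adjugate A)ᵀ *ᵥ x = 0) : False := by
  -- det = 0
  have hd : A.det = 0 := Matrix.exists_mulVec_eq_zero_iff.mp ⟨x, hx, hAx⟩
  -- ker has finrank 1
  have hrn : A.rank + finrank ℝ (LinearMap.ker A.mulVecLin) = n := by
    have := LinearMap.finrank_range_add_finrank_ker A.mulVecLin
    simpa [Matrix.rank, Module.finrank_pi] using this
  have hxker : x ∈ LinearMap.ker A.mulVecLin := by simpa [LinearMap.mem_ker] using hAx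
  have hkerne : finrank ℝ (LinearMap.ker A.mulVecLin) ≠ 0 := by
    intro h0
    rw [Submodule.finrank_eq_zero] at h0
    rw [h0] at hxker
    exact hx (by simpa using hxker)
  have hrle : A.rank ≤ n := Matrix.rank_le_card_width A |>.trans (by simp)
  have hker1 : finrank ℝ (LinearMap.ker A.mulVecLin) = 1 := by omega
  -- ker = span {x}
  have hspan : LinearMap.ker A.mulVecLin = Submodule.span ℝ {x} := by
    apply (Submodule.eq_of_le_of_finrank_le ((Submodule.span_singleton_le_iff_mem x _).mpr hxker) ?_).symm
    rw [hker1, finrank_span_singleton hx]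
  -- a nonzero column of adjugate
  obtain ⟨i0, j0, hij⟩ : ∃ i j, adjugate A i j ≠ 0 := by
    by_contra hc
    push_neg at hc
    exact hadj (by ext i j; simpa using hc i j)
  -- the column is in the kernel
  have hcol : (fun i => adjugate A i j0) ∈ LinearMap.ker A.mulVecLin := by
    rw [LinearMap.mem_ker]
    have : (fun i => adjugate A i j0) = adjugate A *ᵥ Pi.single j0 1 := by
      funext i
      rw [mulVec_single]
      simp
    show A *ᵥ _ = 0
    rw [this, mulVec_mulVec, mul_adjugate, hd]
    simp
    rfl
  rw [hspan, Submodule.mem_span_singleton] at hcol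
  obtain ⟨c, hc⟩ := hcol
  -- use adjᵀ x = 0 at entry j0
  have h0 : ∑ i, adjugate A i j0 * x i = 0 := by
    have := congrFun hax j0
    simpa [mulVec, dotProduct, transpose_apply] using this
  have hcfun : ∀ i, adjugate A i j0 = c * x i := fun i => (congrFun hc i).symm ▸ rfl
  have h1 : c * ∑ i, x i * x i = 0 := by
    rw [Finset.mul_sum]
    rw [← h0]
    apply Finset.sum_congr rfl
    intro i _
    rw [hcfun i]
    ring
  have hxx : 0 < ∑ i, x i * x i := by
    have hne : ∃ i, x i ≠ 0 := by
      by_contra hcon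
      push_neg at hcon
      exact hx (funext hcon)
    obtain ⟨i1, hi1⟩ := hne
    have : ∀ i ∈ Finset.univ, 0 ≤ x i * x i := fun i _ => mul_self_nonneg _
    apply Finset.sum_pos' this ⟨i1, Finset.mem_univ _, mul_self_pos.mpr hi1⟩
  have hc0 : c = 0 := by
    rcases mul_eq_zero.mp h1 with h | h
    · exact h
    · exact absurd h (ne_of_gt hxx)
  apply hij
  rw [hcfun i0, hc0, zero_mul]

private
-- real/imaginary part extraction
lemma mapped_mulVec_parts {n : ℕ} (M : Matrix (Fin n) (Fin n) ℝ) (v : Fin n → ℂ)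
    (h : (M.map Complex.ofReal) *ᵥ v = 0) :
    M *ᵥ (fun i => (v i).re) = 0 ∧ M *ᵥ (fun i => (v i).im) = 0 := by
  constructor <;> funext j <;>
  · have hj := congrFun h j
    simp only [mulVec, dotProduct, map_apply, Pi.zero_apply] at hj ⊢
    first
    | · have := congrArg Complex.re hj
        rw [Complex.re_sum] at this
        simpa [Complex.mul_re] using this
    | · have := congrArg Complex.im hj
        rw [Complex.im_sum] at this
        simpa [Complex.mul_im] using this


theorem psi_isUnit_of_real {n : ℕ} (hn : 2 ≤ n) (A : Matrix (Fin n) (Fin n) ℝ)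
    (hrank : n - 1 ≤ A.rank) :
    IsUnit ((A.map (Complex.ofReal)) + Complex.I • ((A.map (Complex.ofReal)).adjugate)ᵀ) := by
  have key : ∀ x : Fin n → ℝ, x ≠ 0 → A *ᵥ x = 0 → (adjugate A)ᵀ *ᵥ x = 0 → False :=
    fun x hx h1 h2 => aux_key hn A hrank (aux_adjugate_ne_zero hn A hrank) x hx h1 h2
  set A' := A.map (Complex.ofReal) with hA'
  rw [Matrix.isUnit_iff_isUnit_det, isUnit_iff_ne_zero]
  intro hdet0
  obtain ⟨v, hv, hBv⟩ := Matrix.exists_mulVec_eq_zero_iff.mpr hdet0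
  have hadj' : adjugate A' = (adjugate A).map Complex.ofReal := by
    rw [hA']
    exact (RingHom.map_adjugate Complex.ofRealHom A).symm
  set u := A' *ᵥ v with hu
  set w := (adjugate A')ᵀ *ᵥ v with hwdef
  have huw : u + Complex.I • w = 0 := by
    rw [hu, hwdef, ← Matrix.smul_mulVec, ← Matrix.add_mulVec]
    exact hBv
  -- conjugate-transpose fact
  have hct : ((adjugate A')ᵀ)ᴴ = adjugate A' := by
    ext i j
    rw [conjTranspose_apply, transpose_apply, hadj']
    simp [map_apply, Complex.conj_ofReal]
  have hdetmap : A'.det = (A.det : ℂ) := by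
    rw [hA']
    exact (RingHom.map_det Complex.ofRealHom A).symm
  have hswu : star w ⬝ᵥ u = (A.det : ℂ) * (star v ⬝ᵥ v) := by
    rw [hwdef, star_mulVec, hct, hu, ← dotProduct_mulVec, mulVec_mulVec, adjugate_mul, hdetmap,
      Matrix.smul_mulVec, Matrix.one_mulVec]
    rw [dotProduct_smul, smul_eq_mul]
  have hkey : star w ⬝ᵥ u + Complex.I * (star w ⬝ᵥ w) = 0 := by
    have h2 := congrArg (fun z => star w ⬝ᵥ z) huw
    simpa [dotProduct_add, dotProduct_smul, smul_eq_mul] using h2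
  -- rewrite dot products as real sums
  have hsv : star v ⬝ᵥ v = ((∑ i, Complex.normSq (v i) : ℝ) : ℂ) := by
    rw [dotProduct]
    push_cast
    apply Finset.sum_congr rfl
    intro i _
    simp [Complex.normSq_eq_conj_mul_self]
  have hsw : star w ⬝ᵥ w = ((∑ i, Complex.normSq (w i) : ℝ) : ℂ) := by
    rw [dotProduct]
    push_cast
    apply Finset.sum_congr rfl
    intro i _
    simp [Complex.normSq_eq_conj_mul_self]
  rw [hswu, hsv, hsw] at hkey
  have him : (∑ i, Complex.normSq (w i)) = 0 := by
    have := congrArg Complex.im hkey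
    simpa using this
  have hw0 : w = 0 := by
    funext i
    have hnn : ∀ i ∈ Finset.univ, (0:ℝ) ≤ Complex.normSq (w i) := fun i _ => Complex.normSq_nonneg _
    have := (Finset.sum_eq_zero_iff_of_nonneg hnn).mp him i (Finset.mem_univ i)
    simpa using Complex.normSq_eq_zero.mp this
  have hu0 : u = 0 := by
    rw [hw0, smul_zero, add_zero] at huw
    exact huw
  -- extract real and imaginary parts
  have hAv := mapped_mulVec_parts A v hu0
  have hwv : ((adjugate A)ᵀ.map Complex.ofReal) *ᵥ v = 0 := by
    have hmt : ((adjugate A)ᵀ).map Complex.ofReal = (adjugate A')ᵀ := by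
      rw [hadj', Matrix.transpose_map]
    rw [hmt, ← hwdef, hw0]
  have hadjv := mapped_mulVec_parts (adjugate A)ᵀ v hwv
  by_cases hre : (fun i => (v i).re) = (0 : Fin n → ℝ)
  · have him0 : (fun i => (v i).im) ≠ (0 : Fin n → ℝ) := by
      intro h0
      apply hv
      funext i
      have h1 := congrFun hre i
      have h2 := congrFun h0 i
      simp only [Pi.zero_apply] at h1 h2
      exact Complex.ext h1 h2
    exact key _ him0 hAv.2 hadjv.2
  · exact key _ hre hAv.1 hadjv.1
end

section
/- Let V be a finite-dimensional real vector subspace of M_n(ℂ) (n even, n ≥ 2) such that every nonzero element of V is a real matrix of rank at least n-1. Then for every nonzero A ∈ V, the matrix A + i·adj(A)^T is invertible, and the map A ↦ A + i·adj(A)^T restricted to V \ {0} is odd (sends -A to the negative of the image of A). -/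
open Matrix

private lemma vecMul_eq_sum' {n : ℕ} {K : Type*} [CommRing K] (v : Fin n → K)
    (M : Matrix (Fin n) (Fin n) K) : v ᵥ* M = ∑ k, v k • M k := by
  funext i
  simp [Matrix.vecMul, dotProduct, Finset.sum_apply]

private lemma adjugate_ne_zero_of_rank {n : ℕ} {K : Type*} [Field K] (hn2 : 2 ≤ n)
    {B : Matrix (Fin n) (Fin n) K} (hr : B.rank = n - 1) : B.adjugate ≠ 0 := by
  intro hadj
  have hcard : Fintype.card (Fin n) = n := Fintype.card_fin n
  have hdet : B.det = 0 := by
    by_contra hd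
    have hu : IsUnit B := (Matrix.isUnit_iff_isUnit_det B).mpr (isUnit_iff_ne_zero.mpr hd)
    have := B.rank_of_isUnit hu
    rw [hr, hcard] at this
    omega
  obtain ⟨c, hc0, hc⟩ := Matrix.exists_vecMul_eq_zero_iff.mpr hdet
  set L := LinearMap.ker (Bᵀ.mulVecLin) with hLdef
  have hcL : c ∈ L := by
    rw [LinearMap.mem_ker, Matrix.mulVecLin_apply, Matrix.mulVec_transpose]
    exact hc
  have hfinL : Module.finrank K L = 1 := by
    have h1 := LinearMap.finrank_range_add_finrank_ker (Bᵀ.mulVecLin)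
    have h2 : Module.finrank K (Fin n → K) = n := Module.finrank_fin_fun K
    have h3 : Bᵀ.rank = n - 1 := by rw [Matrix.rank_transpose]; exact hr
    have h4 : Module.finrank K (LinearMap.range Bᵀ.mulVecLin) = n - 1 := h3
    rw [hLdef]
    omega
  have hLspan : Submodule.span K {c} = L := by
    apply Submodule.eq_of_le_of_finrank_le
    · rw [Submodule.span_le, Set.singleton_subset_iff]; exact hcL
    · rw [hfinL, finrank_span_singleton hc0]
  obtain ⟨j, hcj⟩ : ∃ j, c j ≠ 0 := by
    by_contra h
    push_neg at h
    exact hc0 (funext h)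
  set S := Submodule.span K (Set.range B) with hSdef
  have hSfin : Module.finrank K S = n - 1 := by
    exact (Matrix.rank_eq_finrank_span_row B).symm.trans hr
  obtain ⟨i, hi⟩ : ∃ i, Pi.single i (1 : K) ∉ S := by
    by_contra h
    push_neg at h
    have htop : S = ⊤ := by
      rw [eq_top_iff, ← (Pi.basisFun K (Fin n)).span_eq, Submodule.span_le]
      rintro _ ⟨i, rfl⟩
      simpa [Pi.basisFun_apply] using h i
    rw [htop, finrank_top, Module.finrank_fin_fun] at hSfin
    omega
  set M := B.updateRow j (Pi.single i (1 : K)) with hMdef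
  have hdetM : M.det ≠ 0 := by
    intro hMdet
    obtain ⟨d, hd0, hd⟩ := Matrix.exists_vecMul_eq_zero_iff.mpr hMdet
    have e1 : d ᵥ* M = d j • (Pi.single i 1 : Fin n → K) + ∑ k ∈ Finset.univ.erase j, d k • B k := by
      rw [vecMul_eq_sum', ← Finset.add_sum_erase _ _ (Finset.mem_univ j)]
      congr 1
      · rw [hMdef, Matrix.updateRow_self]
      · exact Finset.sum_congr rfl fun k hk => by
          rw [hMdef, Matrix.updateRow_ne (Finset.ne_of_mem_erase hk)]
    have e2 : (Function.update d j 0) ᵥ* B = ∑ k ∈ Finset.univ.erase j, d k • B k := by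
      rw [vecMul_eq_sum', ← Finset.add_sum_erase _ _ (Finset.mem_univ j),
        Function.update_self, zero_smul, zero_add]
      exact Finset.sum_congr rfl fun k hk => by
        rw [Function.update_of_ne (Finset.ne_of_mem_erase hk)]
    have hsum : d j • (Pi.single i 1 : Fin n → K) + (Function.update d j 0) ᵥ* B = 0 := by
      rw [e2, ← e1]; exact hd
    by_cases hdj : d j = 0
    · have hud : Function.update d j 0 = d := by
        funext k
        by_cases h : k = j
        · subst h; simp [hdj]
        · rw [Function.update_of_ne h]
      rw [hud, hdj, zero_smul, zero_add] at hsum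
      have hdL : d ∈ L := by
        rw [LinearMap.mem_ker, Matrix.mulVecLin_apply, Matrix.mulVec_transpose]
        exact hsum
      rw [← hLspan, Submodule.mem_span_singleton] at hdL
      obtain ⟨t, rfl⟩ := hdL
      have : t * c j = 0 := hdj
      have ht : t = 0 := by
        rcases mul_eq_zero.mp this with h | h
        · exact h
        · exact absurd h hcj
      rw [ht, zero_smul] at hd0
      exact hd0 rfl
    · apply hi
      have hx : (Pi.single i 1 : Fin n → K) = (-(d j)⁻¹) • ((Function.update d j 0) ᵥ* B) := by
        have : d j • (Pi.single i 1 : Fin n → K) = -((Function.update d j 0) ᵥ* B) := by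
          rw [eq_neg_iff_add_eq_zero]; exact hsum
        rw [neg_smul, ← smul_neg, ← this, smul_smul, inv_mul_cancel₀ hdj, one_smul]
      rw [hx]
      apply Submodule.smul_mem
      rw [vecMul_eq_sum']
      exact Submodule.sum_mem _ fun k _ =>
        Submodule.smul_mem _ _ (Submodule.subset_span ⟨k, rfl⟩)
  apply hdetM
  rw [← Matrix.adjugate_apply, hadj]
  rfl



private lemma star_mulVec_real {n : ℕ} {P : Matrix (Fin n) (Fin n) ℂ}
    (hP : ∀ i j, (P i j).im = 0) (v : Fin n → ℂ) : star (P *ᵥ v) = P *ᵥ (star v) := by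
  funext i
  show star (∑ k, P i k * v k) = ∑ k, P i k * star (v k)
  rw [star_sum]
  refine Finset.sum_congr rfl fun k _ => ?_
  rw [star_mul']
  congr 1
  rw [Complex.star_def]
  exact Complex.conj_eq_iff_im.mpr (hP i k)

private lemma dot_aux {n : ℕ} (P Q : Matrix (Fin n) (Fin n) ℂ) (a b : Fin n → ℂ) :
    (P *ᵥ a) ⬝ᵥ (Q *ᵥ b) = a ⬝ᵥ ((Pᵀ * Q) *ᵥ b) := by
  rw [← Matrix.mulVec_mulVec, dotProduct_mulVec a Pᵀ, Matrix.vecMul_transpose]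

open ComplexOrder in
private lemma dot_star_self_zero {n : ℕ} {w : Fin n → ℂ} (h : star w ⬝ᵥ w = 0) : w = 0 :=
  dotProduct_star_self_eq_zero.mp h

open ComplexOrder in
private lemma dot_self_zero {n : ℕ} {x y : Fin n → ℂ}
    (h : star x ⬝ᵥ x + star y ⬝ᵥ y = 0) : x = 0 ∧ y = 0 := by
  have ha := dotProduct_star_self_nonneg x
  have hb := dotProduct_star_self_nonneg y
  have h1 : star x ⬝ᵥ x = 0 := by
    refine le_antisymm ?_ ha
    have : star x ⬝ᵥ x = -(star y ⬝ᵥ y) := by linear_combination h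
    rw [this]
    exact neg_nonpos.mpr hb
  have h2 : star y ⬝ᵥ y = 0 := by linear_combination h - h1
  exact ⟨dotProduct_star_self_eq_zero.mp h1,
    dotProduct_star_self_eq_zero.mp h2⟩

theorem psi_on_real_subspace {n : ℕ} (hn : Even n) (hn2 : 2 ≤ n)
    (V : Submodule ℝ (Matrix (Fin n) (Fin n) ℂ))
    (hV : ∀ A ∈ V, A ≠ 0 → (∀ i j, (A i j).im = 0) ∧ n - 1 ≤ A.rank) :
    ∀ A ∈ V, A ≠ 0 →
      IsUnit (A + Complex.I • (A.adjugate)ᵀ) ∧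
        (-A) + Complex.I • ((-A).adjugate)ᵀ = -(A + Complex.I • (A.adjugate)ᵀ) := by
  intro A hAV hA0
  obtain ⟨hre, hrk⟩ := hV A hAV hA0
  have hadjneg : (-A).adjugate = -A.adjugate := by
    have h := Matrix.adjugate_smul (-1 : ℂ) A
    have hodd : Odd (Fintype.card (Fin n) - 1) := by
      rw [Fintype.card_fin]
      exact Nat.Even.sub_odd (by omega) hn odd_one
    rw [neg_one_smul] at h
    rw [h, hodd.neg_one_pow, neg_one_smul]
  refine ⟨?_, by rw [hadjneg, Matrix.transpose_neg, smul_neg, neg_add]⟩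
  have hadjre : ∀ i j, (A.adjugate i j).im = 0 := by
    set R : Matrix (Fin n) (Fin n) ℝ := Matrix.of fun i j => (A i j).re with hR
    have hA : (Complex.ofRealHom : ℝ →+* ℂ).mapMatrix R = A := by
      ext i j
      apply Complex.ext
      · simp [hR]
      · simp [hR, hre i j]
    have h := RingHom.map_adjugate (Complex.ofRealHom : ℝ →+* ℂ) R
    rw [hA] at h
    intro i j
    rw [← h]
    simp
  apply (Matrix.isUnit_iff_isUnit_det _).mpr
  rw [isUnit_iff_ne_zero]
  intro hdetB
  obtain ⟨v, hv0, hv⟩ := Matrix.exists_mulVec_eq_zero_iff.mpr hdetB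
  set N := (A.adjugate)ᵀ with hN
  have hNre : ∀ i j, (N i j).im = 0 := fun i j => hadjre j i
  set x := A *ᵥ v with hx
  set y := N *ᵥ v with hy
  set u := star v with hu
  have hxy : x + Complex.I • y = 0 := by
    rw [hx, hy, ← Matrix.smul_mulVec, ← Matrix.add_mulVec]
    exact hv
  have hcross : star x ⬝ᵥ y = star y ⬝ᵥ x := by
    have h1 : star x = A *ᵥ u := star_mulVec_real hre v
    have h2 : star y = N *ᵥ u := star_mulVec_real hNre v
    rw [h1, h2, hx, hy, dot_aux, dot_aux]
    congr 2
    rw [hN, ← Matrix.transpose_mul, Matrix.adjugate_mul, Matrix.transpose_transpose,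
      Matrix.adjugate_mul]
    rw [Matrix.transpose_smul, Matrix.transpose_one]
  have expand : star (x + Complex.I • y) ⬝ᵥ (x + Complex.I • y)
      = star x ⬝ᵥ x + star y ⬝ᵥ y + Complex.I * (star x ⬝ᵥ y) - Complex.I * (star y ⬝ᵥ x) := by
    simp only [star_add, star_smul, Complex.star_def, Complex.conj_I, add_dotProduct,
      dotProduct_add, smul_dotProduct, dotProduct_smul, smul_eq_mul,
      neg_smul, neg_dotProduct, Complex.I_mul_I]
    ring_nf
    rw [Complex.I_sq]
    ring
  have hzero : star x ⬝ᵥ x + star y ⬝ᵥ y = 0 := by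
    have h0 : star (x + Complex.I • y) ⬝ᵥ (x + Complex.I • y) = 0 := by
      rw [hxy]; simp
    rw [expand, hcross] at h0
    linear_combination h0
  obtain ⟨hx0, hy0⟩ := dot_self_zero hzero
  have hdetA : A.det = 0 :=
    Matrix.exists_mulVec_eq_zero_iff.mp ⟨v, hv0, by rw [← hx]; exact hx0⟩
  set Kk := LinearMap.ker (A.mulVecLin) with hKk
  have hvK : v ∈ Kk := by
    rw [hKk, LinearMap.mem_ker, Matrix.mulVecLin_apply, ← hx]
    exact hx0
  have hspanle : Submodule.span ℂ {v} ≤ Kk := by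
    rw [Submodule.span_le, Set.singleton_subset_iff]; exact hvK
  have hkey : A.rank = n - 1 ∧ Module.finrank ℂ Kk = 1 := by
    have h1 := LinearMap.finrank_range_add_finrank_ker A.mulVecLin
    have h2 : Module.finrank ℂ (Fin n → ℂ) = n := Module.finrank_fin_fun ℂ
    have h3 : Module.finrank ℂ (LinearMap.range A.mulVecLin) = A.rank := rfl
    have h4 : 1 ≤ Module.finrank ℂ Kk := by
      calc 1 = Module.finrank ℂ (Submodule.span ℂ {v}) := (finrank_span_singleton hv0).symm
      _ ≤ Module.finrank ℂ Kk := Submodule.finrank_mono hspanle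
    rw [hKk] at h4
    constructor
    · omega
    · rw [hKk]; omega
  have hKspan : Submodule.span ℂ {v} = Kk := by
    apply Submodule.eq_of_le_of_finrank_le hspanle
    rw [hkey.2, finrank_span_singleton hv0]
  have hNj : ∀ j, N j = 0 := by
    intro j
    have hNjK : N j ∈ Kk := by
      rw [hKk, LinearMap.mem_ker, Matrix.mulVecLin_apply]
      funext i
      have h := congrFun (congrFun (Matrix.mul_adjugate A) i) j
      rw [hdetA, zero_smul] at h
      simpa [Matrix.mulVec, dotProduct, Matrix.mul_apply, hN] using h
    rw [← hKspan, Submodule.mem_span_singleton] at hNjK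
    obtain ⟨t, ht⟩ := hNjK
    have hyj : N j ⬝ᵥ v = 0 := by
      have h := congrFun hy0 j
      rw [hy] at h
      exact h
    by_cases htz : t = 0
    · rw [← ht, htz, zero_smul]
    · have hvv : v ⬝ᵥ v = 0 := by
        rw [← ht, smul_dotProduct, smul_eq_mul] at hyj
        exact (mul_eq_zero.mp hyj).resolve_left htz
      have hstarN : star (N j) = N j := by
        funext k
        show star (N j k) = N j k
        rw [Complex.star_def]
        exact Complex.conj_eq_iff_im.mpr (hNre j k)
      have hNN : star (N j) ⬝ᵥ (N j) = 0 := by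
        rw [hstarN, ← ht]
        simp [smul_dotProduct, dotProduct_smul, smul_eq_mul, hvv]
      exact dot_star_self_zero hNN
  have hadj0 : A.adjugate = 0 := by
    ext k j
    have h := congrFun (hNj j) k
    simpa [hN] using h
  exact adjugate_ne_zero_of_rank hn2 hkey.1 hadj0
end

section
/- Let A be an n×n complex matrix and s a positive real number. If rank(A) ≥ n-1 (n ≥ 2) and det(A) is not a negative imaginary number (not of the form i·r with r < 0 real), then A + s·i·conj(adj(A))^T is invertible. -/
open Matrix
open scoped ComplexOrder

private lemma det_ne_zero_of_span_rows_top {n : ℕ} (M : Matrix (Fin n) (Fin n) ℂ)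
    (h : Submodule.span ℂ (Set.range M) = ⊤) : M.det ≠ 0 := by
  intro hdet
  obtain ⟨c, hc0, hMc⟩ := Matrix.exists_mulVec_eq_zero_iff.mpr hdet
  have hker : ∀ w ∈ Submodule.span ℂ (Set.range M), w ⬝ᵥ c = 0 := by
    intro w hw
    induction hw using Submodule.span_induction with
    | mem w hw =>
      obtain ⟨k, rfl⟩ := hw
      have := congrFun hMc k
      simpa [Matrix.mulVec, dotProduct] using this
    | zero => simp
    | add a b _ _ ha hb => rw [add_dotProduct, ha, hb, add_zero]
    | smul r a _ ha => rw [smul_dotProduct, ha, smul_zero]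
  have : star c ⬝ᵥ c = 0 := hker (star c) (h ▸ Submodule.mem_top)
  exact hc0 (dotProduct_star_self_eq_zero.mp this)

private lemma adjugate_ne_zero_of_rank_s18 {n : ℕ} (hn : 2 ≤ n) (A : Matrix (Fin n) (Fin n) ℂ)
    (hr : A.rank = n - 1) : A.adjugate ≠ 0 := by
  have hd : A.det = 0 := by
    by_contra hd
    have : IsUnit A := (Matrix.isUnit_iff_isUnit_det A).mpr (isUnit_iff_ne_zero.mpr hd)
    have := Matrix.rank_of_isUnit A this
    simp only [Fintype.card_fin] at this
    omega
  have hdT : Aᵀ.det = 0 := by rwa [Matrix.det_transpose]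
  obtain ⟨u, hu0, hu⟩ := Matrix.exists_mulVec_eq_zero_iff.mpr hdT
  obtain ⟨j, hj⟩ : ∃ j, u j ≠ 0 := Function.ne_iff.mp hu0
  set W := Submodule.span ℂ (Set.range A) with hWdef
  have hW : Module.finrank ℂ W = n - 1 := by
    rw [hWdef, ← hr, Matrix.rank_eq_finrank_span_row]; rfl
  have hWtop : W ≠ ⊤ := by
    intro htop
    rw [htop, finrank_top, Module.finrank_fintype_fun_eq_card, Fintype.card_fin] at hW
    omega
  obtain ⟨i, hi⟩ : ∃ i, Pi.single i (1 : ℂ) ∉ W := by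
    by_contra h'
    push_neg at h'
    apply hWtop
    rw [eq_top_iff, ← (Pi.basisFun ℂ (Fin n)).span_eq, Submodule.span_le]
    rintro _ ⟨i, rfl⟩
    simpa using h' i
  set M := A.updateRow j (Pi.single i 1) with hM
  have hsum : ∑ k, u k • A k = 0 := by
    funext l
    have := congrFun hu l
    simpa [Matrix.mulVec, dotProduct, Matrix.transpose_apply, mul_comm,
      Finset.sum_apply] using this
  have hsub : W ≤ Submodule.span ℂ (Set.range M) := by
    rw [hWdef, Submodule.span_le]
    rintro _ ⟨k, rfl⟩
    by_cases hk : k = j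
    · subst hk
      have hAj : A k = (-(u k)⁻¹) • ∑ m ∈ Finset.univ.erase k, u m • A m := by
        have h1 : u k • A k + ∑ m ∈ Finset.univ.erase k, u m • A m = 0 := by
          rw [← hsum]
          exact Finset.add_sum_erase _ (fun m => u m • A m) (Finset.mem_univ k)
        have h2 : u k • A k = -∑ m ∈ Finset.univ.erase k, u m • A m := by
          linear_combination (norm := module) h1
        rw [neg_smul, ← smul_neg, ← h2, inv_smul_smul₀ hj]
      rw [hAj]
      refine Submodule.smul_mem _ _ (Submodule.sum_mem _ ?_)
      intro m hm
      refine Submodule.smul_mem _ _ (Submodule.subset_span ⟨m, ?_⟩)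
      exact Matrix.updateRow_ne (Finset.ne_of_mem_erase hm)
    · exact Submodule.subset_span ⟨k, Matrix.updateRow_ne hk⟩
  have hMi : Pi.single i (1 : ℂ) ∈ Submodule.span ℂ (Set.range M) :=
    Submodule.subset_span ⟨j, Matrix.updateRow_self⟩
  have hlt : W < Submodule.span ℂ (Set.range M) :=
    lt_of_le_of_ne hsub (fun h => hi (h ▸ hMi))
  have h1 : n - 1 < Module.finrank ℂ (Submodule.span ℂ (Set.range M)) :=
    hW ▸ Submodule.finrank_lt_finrank_of_lt hlt
  have h2 : Module.finrank ℂ (Submodule.span ℂ (Set.range M)) ≤ n := by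
    have := Submodule.finrank_le (Submodule.span ℂ (Set.range M))
    rwa [Module.finrank_fintype_fun_eq_card, Fintype.card_fin] at this
  have hMtop : Submodule.span ℂ (Set.range M) = ⊤ := by
    apply Submodule.eq_top_of_finrank_eq
    rw [Module.finrank_fintype_fun_eq_card, Fintype.card_fin]
    omega
  have hdM : M.det ≠ 0 := det_ne_zero_of_span_rows_top M hMtop
  intro h0
  apply hdM
  rw [← Matrix.adjugate_apply, h0]
  rfl

theorem psi_s_isUnit {n : ℕ} (hn : 2 ≤ n) (A : Matrix (Fin n) (Fin n) ℂ) (s : ℝ) (hs : 0 < s)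
    (hrank : n - 1 ≤ A.rank)
    (hdet : ¬ ∃ r : ℝ, r < 0 ∧ A.det = Complex.I * r) :
    IsUnit (A + ((s : ℂ) * Complex.I) • (A.adjugate)ᴴ) := by
  set B := A + ((s : ℂ) * Complex.I) • (A.adjugate)ᴴ with hB
  by_contra hBu
  have hdetB : B.det = 0 := by
    by_contra h
    exact hBu ((Matrix.isUnit_iff_isUnit_det B).mpr (isUnit_iff_ne_zero.mpr h))
  obtain ⟨x, hx0, hx⟩ := Matrix.exists_mulVec_eq_zero_iff.mpr hdetB
  set c := (A.adjugate)ᴴ *ᵥ x with hc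
  have hstarc : star c = star x ᵥ* A.adjugate := by
    rw [hc, Matrix.star_mulVec, Matrix.conjTranspose_conjTranspose]
  have hBx : A *ᵥ x + ((s : ℂ) * Complex.I) • c = 0 := by
    rw [hc, ← Matrix.smul_mulVec, ← Matrix.add_mulVec, ← hB]
    exact hx
  have key : A.det * (star x ⬝ᵥ x) + ((s : ℂ) * Complex.I) * (star c ⬝ᵥ c) = 0 := by
    have h0 : star c ⬝ᵥ (A *ᵥ x + ((s : ℂ) * Complex.I) • c) = 0 := by
      rw [hBx, dotProduct_zero]
    rw [dotProduct_add, dotProduct_smul] at h0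
    have h1 : star c ⬝ᵥ (A *ᵥ x) = A.det * (star x ⬝ᵥ x) := by
      rw [hstarc, ← Matrix.dotProduct_mulVec, Matrix.mulVec_mulVec, Matrix.adjugate_mul,
        Matrix.smul_mulVec, Matrix.one_mulVec, dotProduct_smul, smul_eq_mul]
    rw [h1] at h0
    simpa [smul_eq_mul] using h0
  set P := star x ⬝ᵥ x with hPdef
  set Q := star c ⬝ᵥ c with hQdef
  have hPnn : 0 ≤ P := dotProduct_star_self_nonneg x
  have hPne : P ≠ 0 := fun h => hx0 (dotProduct_star_self_eq_zero.mp h)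
  have hQnn : 0 ≤ Q := dotProduct_star_self_nonneg c
  have hPim : P.im = 0 := by
    have := (Complex.le_def.mp hPnn).2; simpa using this.symm
  have hQim : Q.im = 0 := by
    have := (Complex.le_def.mp hQnn).2; simpa using this.symm
  have hPc : (P.re : ℂ) = P := Complex.ext (by simp) (by simp [hPim])
  have hQc : (Q.re : ℂ) = Q := Complex.ext (by simp) (by simp [hQim])
  have hPre : 0 < P.re := by
    rcases lt_or_eq_of_le (Complex.le_def.mp hPnn).1 with h | h
    · simpa using h
    · exact absurd (by rw [← hPc, ← h]; simp) hPne
  have hp0 : (P.re : ℂ) ≠ 0 := by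
    exact_mod_cast ne_of_gt hPre
  by_cases hq : Q.re = 0
  · -- degenerate case : c = 0
    have hQ0 : Q = 0 := by rw [← hQc, hq]; simp
    have hc0 : c = 0 := dotProduct_star_self_eq_zero.mp hQ0
    have hAx : A *ᵥ x = 0 := by
      have := hBx; rw [hc0, smul_zero, add_zero] at this; exact this
    have hdA : A.det = 0 := by
      have : A.det * P = 0 := by rw [← key, hQ0, mul_zero, add_zero]
      exact (mul_eq_zero.mp this).resolve_right hPne
    -- rank A = n - 1
    have hrn : A.rank ≠ n := by
      intro h
      have htop : LinearMap.range A.mulVecLin = ⊤ := by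
        apply Submodule.eq_top_of_finrank_eq
        rw [Module.finrank_fintype_fun_eq_card, Fintype.card_fin]
        exact h
      have hinj : Function.Injective A.mulVecLin :=
        (LinearMap.injective_iff_surjective).mpr (LinearMap.range_eq_top.mp htop)
      apply hx0
      have : A.mulVecLin x = A.mulVecLin 0 := by
        simp [Matrix.mulVecLin_apply, hAx]
      exact hinj this
    have hrle : A.rank ≤ n := by
      have := Matrix.rank_le_card_width A
      simpa using this
    have hrk : A.rank = n - 1 := by omega
    have hadj : A.adjugate ≠ 0 := adjugate_ne_zero_of_rank_s18 hn A hrk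
    obtain ⟨k, l, hl⟩ : ∃ k l, A.adjugate k l ≠ 0 := by
      by_contra h
      push_neg at h
      exact hadj (by ext k l; simpa using h k l)
    set v := A.adjugate *ᵥ Pi.single l 1 with hv
    have hvk : v k = A.adjugate k l := by
      rw [hv, Matrix.mulVec_single]
      simp
    have hv0 : v ≠ 0 := by
      intro h
      apply hl
      rw [← hvk, h, Pi.zero_apply]
    have hAv : A *ᵥ v = 0 := by
      rw [hv, Matrix.mulVec_mulVec, Matrix.mul_adjugate, hdA, zero_smul,
        Matrix.zero_mulVec]
    -- kernel of A is span of x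
    have hker : LinearMap.ker A.mulVecLin = Submodule.span ℂ {x} := by
      have hle : Submodule.span ℂ {x} ≤ LinearMap.ker A.mulVecLin := by
        rw [Submodule.span_le, Set.singleton_subset_iff]
        exact LinearMap.mem_ker.mpr (by simpa [Matrix.mulVecLin_apply] using hAx)
      have hrn : Module.finrank ℂ (LinearMap.ker A.mulVecLin) = 1 := by
        have := LinearMap.finrank_range_add_finrank_ker A.mulVecLin
        rw [Module.finrank_fintype_fun_eq_card, Fintype.card_fin] at this
        have hrkr : Module.finrank ℂ (LinearMap.range A.mulVecLin) = n - 1 := hrk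
        omega
      have hsp : Module.finrank ℂ (Submodule.span ℂ {x}) = 1 :=
        finrank_span_singleton hx0
      exact (Submodule.eq_of_le_of_finrank_le hle (by rw [hrn, hsp])).symm
    have hvmem : v ∈ Submodule.span ℂ ({x} : Set (Fin n → ℂ)) := by
      rw [← hker]
      exact LinearMap.mem_ker.mpr (by simpa [Matrix.mulVecLin_apply] using hAv)
    obtain ⟨t, ht⟩ := Submodule.mem_span_singleton.mp hvmem
    have ht0 : t ≠ 0 := by
      intro h; apply hv0; rw [← ht, h, zero_smul]
    have hdot : star x ⬝ᵥ v = 0 := by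
      rw [hv, Matrix.dotProduct_mulVec, ← hstarc, hc0, star_zero, zero_dotProduct]
    rw [← ht, dotProduct_smul, smul_eq_mul, ← hPdef] at hdot
    exact hPne ((mul_eq_zero.mp hdot).resolve_left ht0)
  · -- nondegenerate case : det A is negative imaginary
    have hQre : 0 < Q.re := lt_of_le_of_ne (Complex.le_def.mp hQnn).1 (Ne.symm (by simpa using hq))
    refine hdet ⟨-(s * Q.re / P.re), ?_, ?_⟩
    · have : 0 < s * Q.re / P.re := div_pos (mul_pos hs hQre) hPre
      linarith
    · have key' : A.det * (P.re : ℂ) + (s : ℂ) * Complex.I * (Q.re : ℂ) = 0 := by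
        rw [hPc, hQc]; exact key
      apply mul_right_cancel₀ hp0
      push_cast
      have h4 : (-((s : ℂ) * (Q.re : ℂ) / (P.re : ℂ))) * (P.re : ℂ)
          = -((s : ℂ) * (Q.re : ℂ)) := by
        rw [neg_mul, div_mul_cancel₀ _ hp0]
      calc A.det * (P.re : ℂ) = -((s : ℂ) * Complex.I * (Q.re : ℂ)) := by
            linear_combination key'
        _ = Complex.I * (-((s : ℂ) * (Q.re : ℂ))) := by ring
        _ = Complex.I * ((-((s : ℂ) * (Q.re : ℂ) / (P.re : ℂ))) * (P.re : ℂ)) := by rw [h4]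
        _ = Complex.I * (-((s : ℂ) * (Q.re : ℂ) / (P.re : ℂ))) * (P.re : ℂ) := by ring
end
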